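/- Let M = (E, I) be a matroid and w : E → ℝ≥0 a weight function. If T ⊆ E is a maximum-weight independent set, then w(T) = ∫₀^∞ rank({e ∈ T : w(e) ≥ θ}) dθ. -/

import Mathlib

open Finset
open scoped Classical

structure FinMatroid (α : Type) [DecidableEq α] where
  E : Finset α
  Indep : Finset α → Prop
  indep_empty : Indep ∅
  subset_ground : ∀ ⦃X⦄, Indep X → X ⊆ E
  indep_mono : ∀ ⦃X Y⦄, X ⊆ Y → Indep Y → Indep X
  indep_exchange : ∀ ⦃X Y⦄, Indep X → Indep Y → X.card < Y.card →
    ∃ e ∈ Y \ X, Indep (insert e X)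

namespace FinMatroid

variable {α : Type} [DecidableEq α]

noncomputable def rank (M : FinMatroid α) (X : Finset α) : ℕ :=
  sSup {n | ∃ Y ⊆ X, M.Indep Y ∧ Y.card = n}

def spn (M : FinMatroid α) (X : Finset α) : Set α :=
  {e | e ∈ M.E ∧ M.rank (insert e X) = M.rank X}

end FinMatroid

lemma rank_of_indep {α : Type} [DecidableEq α] (M : FinMatroid α) {X : Finset α}
    (hX : M.Indep X) : M.rank X = X.card := by
  have hmem : X.card ∈ {n | ∃ Y ⊆ X, M.Indep Y ∧ Y.card = n} :=
    ⟨X, Finset.Subset.refl X, hX, rfl⟩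
  have hub : ∀ n ∈ {n | ∃ Y ⊆ X, M.Indep Y ∧ Y.card = n}, n ≤ X.card := by
    rintro n ⟨Y, hYX, _, rfl⟩
    exact Finset.card_le_card hYX
  have hbdd : BddAbove {n | ∃ Y ⊆ X, M.Indep Y ∧ Y.card = n} := ⟨X.card, hub⟩
  exact le_antisymm (csSup_le ⟨_, hmem⟩ hub) (le_csSup hbdd hmem)

theorem stmt1 {α : Type} [DecidableEq α] (M : FinMatroid α) (w : α → ℝ)
    (hw : ∀ e, 0 ≤ w e) (T : Finset α) (hT : M.Indep T)
    (hmax : ∀ X, M.Indep X → ∑ e ∈ X, w e ≤ ∑ e ∈ T, w e) :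
    ∑ e ∈ T, w e
      = ∫ θ in Set.Ioi (0 : ℝ), ((M.rank (T.filter fun e => θ ≤ w e) : ℝ)) := by
  have hint : ∀ θ ∈ Set.Ioi (0 : ℝ),
      ((M.rank (T.filter fun e => θ ≤ w e) : ℝ))
        = ∑ e ∈ T, (Set.Ioc (0:ℝ) (w e)).indicator (fun _ => (1:ℝ)) θ := by
    intro θ hθ
    rw [rank_of_indep M (M.indep_mono (Finset.filter_subset _ _) hT)]
    rw [Finset.card_filter]
    push_cast
    refine Finset.sum_congr rfl fun e _ => ?_
    by_cases h : θ ≤ w e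
    · rw [if_pos h, Set.indicator_of_mem (Set.mem_Ioc.2 ⟨hθ, h⟩)]
    · rw [if_neg h, Set.indicator_of_notMem (fun hm => h (Set.mem_Ioc.1 hm).2)]
  rw [MeasureTheory.setIntegral_congr_fun measurableSet_Ioi hint,
    MeasureTheory.integral_finset_sum]
  · refine (Finset.sum_congr rfl fun e _ => ?_)
    rw [MeasureTheory.setIntegral_indicator measurableSet_Ioc]
    have : Set.Ioi (0:ℝ) ∩ Set.Ioc 0 (w e) = Set.Ioc 0 (w e) := by
      ext x; simp (config := {contextual := true}) [and_assoc]
    rw [this]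
    simp [Real.volume_Ioc, hw e]
  · intro e _
    exact ((MeasureTheory.integrable_indicator_iff measurableSet_Ioc).2
      ((MeasureTheory.integrableOn_const_iff (C := (1:ℝ))).2 (Or.inr (by simp [Real.volume_Ioc])))).integrableOn
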